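/- Let d be a square-free integer with d < 0 and let α be an algebraic integer with ℚ(α) = ℚ(√d). If d ≡ 2, 3 (mod 4) then H(α) ≥ |d|, with the minimum attained exactly by elements with minimal polynomial x² − d; if d ≡ 1 (mod 4) then H(α) ≥ (1−d)/4, with the minimum attained exactly by elements with minimal polynomial x² ± x + (1−d)/4. -/

import Mathlib

open NumberField IntermediateField Polynomial

lemma quad_form_aux (p : Polynomial ℤ) (hm : p.Monic) (h2 : p.natDegree = 2) :
    p = X ^ 2 + C (p.coeff 1) * X + C (p.coeff 0) := by
  ext n
  simp only [coeff_add, coeff_X_pow, coeff_C_mul, coeff_X, coeff_C]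
  match n with
  | 0 => simp
  | 1 => simp
  | 2 => simpa using by simpa [h2] using hm.coeff_natDegree
  | (n+3) =>
    rw [p.coeff_eq_zero_of_natDegree_lt (by omega)]
    simp

lemma one_le_sq_of_ne_zero_aux {b : ℤ} (hb : b ≠ 0) : 1 ≤ b ^ 2 := by
  nlinarith [Int.one_le_abs hb, sq_abs b]

lemma arith23_aux (d b c e : ℤ) (h4 : d % 4 = 2 ∨ d % 4 = 3) (he : e ≠ 0)
    (h : b ^ 2 - 4 * c = e ^ 2 * d) :
    ∃ f g : ℤ, f ≠ 0 ∧ b = 2 * g ∧ c = g ^ 2 - f ^ 2 * d := by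
  rcases Int.even_or_odd' e with ⟨f, hf | hf⟩ <;> rcases Int.even_or_odd' b with ⟨g, hg | hg⟩
  · exact ⟨f, g, by omega, hg, by subst hf hg; ring_nf at h ⊢; linarith⟩
  · exfalso
    obtain ⟨G, W, h1⟩ : ∃ G W : ℤ, 4 * G + 1 - 4 * c = 4 * W :=
      ⟨g * g + g, f * f * d, by subst hf hg; linear_combination h⟩
    omega
  · exfalso
    obtain ⟨G, W, h1⟩ : ∃ G W : ℤ, 4 * G - 4 * c = 4 * W + d :=
      ⟨g * g, (f * f + f) * d, by subst hf hg; linear_combination h⟩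
    omega
  · exfalso
    obtain ⟨G, W, h1⟩ : ∃ G W : ℤ, 4 * G + 1 - 4 * c = 4 * W + d :=
      ⟨g * g + g, (f * f + f) * d, by subst hf hg; linear_combination h⟩
    omega

lemma arith1_aux (d b c e : ℤ) (h4 : d % 4 = 1) (he : e ≠ 0)
    (h : b ^ 2 - 4 * c = e ^ 2 * d) :
    (∃ f g : ℤ, f ≠ 0 ∧ c = g ^ 2 - f ^ 2 * d) ∨ (Odd b ∧ Odd e) := by
  rcases Int.even_or_odd' e with ⟨f, hf | hf⟩ <;> rcases Int.even_or_odd' b with ⟨g, hg | hg⟩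
  · exact Or.inl ⟨f, g, by omega, by subst hf hg; ring_nf at h ⊢; linarith⟩
  · exfalso
    obtain ⟨G, W, h1⟩ : ∃ G W : ℤ, 4 * G + 1 - 4 * c = 4 * W :=
      ⟨g * g + g, f * f * d, by subst hf hg; linear_combination h⟩
    omega
  · exfalso
    obtain ⟨G, W, h1⟩ : ∃ G W : ℤ, 4 * G - 4 * c = 4 * W + d :=
      ⟨g * g, (f * f + f) * d, by subst hf hg; linear_combination h⟩
    omega
  · exact Or.inr ⟨⟨g, by omega⟩, ⟨f, by omega⟩⟩

/-- Let `d < 0` be square-free and let `α` be an algebraic integer with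
`ℚ(α) = ℚ(√d)`. Its (monic, integral) minimal polynomial is `x² + b·x + c`, and
`H(α) = max(1, |b|, |c|)`. If `d ≡ 2, 3 (mod 4)` then `H(α) ≥ |d|`, with the minimum
attained exactly by elements with minimal polynomial `x² − d`; if `d ≡ 1 (mod 4)` then
`H(α) ≥ (1−d)/4`, with the minimum attained exactly by elements with minimal polynomial
`x² ± x + (1−d)/4`. -/
theorem smallest_integral_generators_imaginary_quadratic
    (d : ℤ) (hd : d < 0) (hsf : Squarefree d)
    (K : Type*) [Field K] [NumberField K]
    (s : K) (hs : s ^ 2 = (d : K)) (hsgen : ℚ⟮s⟯ = ⊤)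
    (α : K) (hint : IsIntegral ℤ α) (hgen : ℚ⟮α⟯ = ⊤) :
    ((d % 4 = 2 ∨ d % 4 = 3) →
      |d| ≤ max 1 (max |(minpoly ℤ α).coeff 1| |(minpoly ℤ α).coeff 0|) ∧
      (max 1 (max |(minpoly ℤ α).coeff 1| |(minpoly ℤ α).coeff 0|) = |d| ↔
        minpoly ℤ α = Polynomial.X ^ 2 - Polynomial.C d)) ∧
    (d % 4 = 1 →
      (1 - d) / 4 ≤ max 1 (max |(minpoly ℤ α).coeff 1| |(minpoly ℤ α).coeff 0|) ∧
      (max 1 (max |(minpoly ℤ α).coeff 1| |(minpoly ℤ α).coeff 0|) = (1 - d) / 4 ↔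
        minpoly ℤ α = Polynomial.X ^ 2 + Polynomial.X + Polynomial.C ((1 - d) / 4) ∨
        minpoly ℤ α = Polynomial.X ^ 2 - Polynomial.X + Polynomial.C ((1 - d) / 4))) := by
  have hdq : (d : ℚ) < 0 := by exact_mod_cast hd
  have hirr : Irreducible (X ^ 2 - C (d : ℚ)) :=
    X_pow_sub_C_irreducible_of_prime Nat.prime_two (fun b hb => by nlinarith [sq_nonneg b])
  have hmon : (X ^ 2 - C (d : ℚ)).Monic := monic_X_pow_sub_C _ (by norm_num)
  have haevs : Polynomial.aeval s (X ^ 2 - C (d : ℚ)) = 0 := by simp [hs]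
  have hsint : IsIntegral ℚ s := ⟨X ^ 2 - C (d : ℚ), hmon, haevs⟩
  have hms : minpoly ℚ s = X ^ 2 - C (d : ℚ) :=
    (minpoly.eq_of_irreducible_of_monic hirr haevs hmon).symm
  have h2 : Module.finrank ℚ K = 2 := by
    rw [← IntermediateField.finrank_top', ← hsgen, IntermediateField.adjoin.finrank hsint,
      hms, natDegree_X_pow_sub_C]
  have hsbot : s ∉ (⊥ : IntermediateField ℚ K) := by
    rw [IntermediateField.mem_bot]
    rintro ⟨r, hr⟩
    have : (r : ℚ) ^ 2 = d := by
      have : (algebraMap ℚ K) (r ^ 2) = algebraMap ℚ K d := by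
        rw [map_pow, hr, hs]; simp
      exact_mod_cast (algebraMap ℚ K).injective this
    nlinarith [sq_nonneg r]
  have li : LinearIndependent ℚ ![(1 : K), s] := by
    rw [LinearIndependent.pair_iff]
    intro a b hab
    rw [Algebra.smul_def, mul_one, Algebra.smul_def] at hab
    by_cases hb : b = 0
    · subst hb
      refine ⟨(algebraMap ℚ K).injective ?_, rfl⟩
      simpa using hab
    · exfalso
      apply hsbot
      rw [IntermediateField.mem_bot]
      refine ⟨-a / b, ?_⟩
      have hbK : algebraMap ℚ K b ≠ 0 := fun h => hb ((algebraMap ℚ K).injective (by simpa using h))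
      rw [map_div₀, map_neg, div_eq_iff hbK]
      linear_combination -hab
  have : Nonempty (Fin 2) := ⟨0⟩
  let B := basisOfLinearIndependentOfCardEqFinrank li (by simp [h2])
  have hB : ⇑B = ![(1 : K), s] := coe_basisOfLinearIndependentOfCardEqFinrank li _
  obtain ⟨x, y, hα⟩ : ∃ x y : ℚ, α = algebraMap ℚ K x + algebraMap ℚ K y * s := by
    have hrepr := B.sum_repr α
    have hB0 : B 0 = 1 := by rw [hB]; rfl
    have hB1 : B 1 = s := by rw [hB]; rfl
    rw [Fin.sum_univ_two, hB0, hB1, Algebra.smul_def, mul_one, Algebra.smul_def] at hrepr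
    exact ⟨_, _, hrepr.symm⟩
  have hy : y ≠ 0 := by
    rintro rfl
    have : α ∈ (⊥ : IntermediateField ℚ K) := by
      rw [IntermediateField.mem_bot]; exact ⟨x, by simp [hα]⟩
    have hbt : (⊥ : IntermediateField ℚ K) = ⊤ := by
      rw [← hgen]
      exact le_antisymm bot_le ((IntermediateField.adjoin_simple_le_iff).mpr this)
    have := IntermediateField.finrank_bot (F := ℚ) (E := K)
    rw [hbt, IntermediateField.finrank_top'] at this
    omega
  have hαQ : IsIntegral ℚ α := hint.tower_top
  have hmpq : minpoly ℚ α = (minpoly ℤ α).map (algebraMap ℤ ℚ) :=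
    minpoly.isIntegrallyClosed_eq_field_fractions' ℚ hint
  have hdeg : (minpoly ℤ α).natDegree = 2 := by
    have := IntermediateField.adjoin.finrank hαQ
    rw [hgen, IntermediateField.finrank_top', h2] at this
    rw [hmpq] at this
    rw [natDegree_map_eq_of_injective (algebraMap ℤ ℚ).injective_int] at this
    omega
  set b := (minpoly ℤ α).coeff 1 with hbdef
  set c := (minpoly ℤ α).coeff 0 with hcdef
  have hquad : minpoly ℤ α = X ^ 2 + C b * X + C c := quad_form_aux _ (minpoly.monic hint) hdeg
  have haev : α ^ 2 + (b : K) * α + (c : K) = 0 := by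
    have := minpoly.aeval ℤ α
    rw [hquad] at this
    simpa [Algebra.smul_def] using this
  have key : (x ^ 2 + y ^ 2 * d + b * x + c : ℚ) • (1 : K)
      + ((2 * x * y + b * y : ℚ)) • s = 0 := by
    rw [Algebra.smul_def, mul_one, Algebra.smul_def]
    push_cast
    simp only [map_add, map_mul, map_pow, map_intCast, map_ofNat]
    rw [hα] at haev
    push_cast at haev
    linear_combination haev - (algebraMap ℚ K y) ^ 2 * hs
  obtain ⟨hA, hB2⟩ := (LinearIndependent.pair_iff.mp li) _ _ key
  have hx : 2 * x + (b : ℚ) = 0 := by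
    have : (2 * x + (b : ℚ)) * y = 0 := by linear_combination hB2
    rcases mul_eq_zero.mp this with h | h
    · exact h
    · exact absurd h hy
  have hq : (d : ℚ) * (2 * y) ^ 2 = (b : ℚ) ^ 2 - 4 * c := by
    linear_combination (4 : ℚ) * hA - ((b : ℚ) + 2 * x) * hx
  set q : ℚ := 2 * y with hqdef
  have hq0 : q ≠ 0 := by simp [hqdef, hy]
  have hint2 : d * q.num ^ 2 = (b ^ 2 - 4 * c) * (q.den : ℤ) ^ 2 := by
    have hden : (q.den : ℚ) ≠ 0 := by exact_mod_cast q.den_nz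
    have hnum : ((q.num : ℚ)) = q * (q.den : ℚ) := by
      exact (Rat.mul_den_eq_num q).symm
    have : (d : ℚ) * (q.num : ℚ) ^ 2 = ((b : ℚ) ^ 2 - 4 * (c : ℚ)) * (q.den : ℚ) ^ 2 := by
      rw [hnum]
      linear_combination ((q.den : ℚ)) ^ 2 * hq
    exact_mod_cast this
  have hcop : IsCoprime q.num (q.den : ℤ) := by
    rw [Int.isCoprime_iff_gcd_eq_one]
    simpa [Int.gcd] using q.reduced
  have hdvd : ((q.den : ℤ)) ^ 2 ∣ d := by
    have h1 : ((q.den : ℤ)) ^ 2 ∣ d * q.num ^ 2 := ⟨b ^ 2 - 4 * c, by linear_combination hint2⟩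
    exact (hcop.symm.pow).dvd_of_dvd_mul_right h1
  have hden1 : ((q.den : ℤ)) = 1 := by
    have hu := hsf ((q.den : ℤ)) (by rwa [pow_two] at hdvd)
    rcases Int.isUnit_iff.mp hu with h | h
    · exact h
    · exfalso; have : (0 : ℤ) < q.den := by exact_mod_cast q.pos
      omega
  set e : ℤ := q.num with hedef
  have he0 : e ≠ 0 := Rat.num_ne_zero.mpr hq0
  have hkey : b ^ 2 - 4 * c = e ^ 2 * d := by
    rw [hden1] at hint2
    linear_combination -hint2
  -- clean up the context
  clear_value b c e
  clear hedef
  clear hα haev key hA hB2 hx hq hq0 hint2 hcop hdvd hden1 hB B li hsbot hms hmon hirr haevs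
  clear hsint hmpq hαQ hdq h2 hy hs hsgen hgen q x y s this hqdef
  -- the abstract height
  have habsc : c ≤ max 1 (max |b| |c|) := le_trans (le_abs_self c)
    (le_trans (le_max_right _ _) (le_max_right _ _))
  constructor
  · -- d ≡ 2, 3 (mod 4)
    intro h4
    obtain ⟨f, g, hf, hbg, hc⟩ := arith23_aux d b c e h4 he0 hkey
    have hf2 : 1 ≤ f ^ 2 := one_le_sq_of_ne_zero_aux hf
    have hclow : -d ≤ c := by nlinarith [sq_nonneg g]
    have habs : |d| = -d := abs_of_neg hd
    refine ⟨by rw [habs]; exact le_trans hclow habsc, ?_, ?_⟩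
    · -- equality → minpoly = X² − d
      intro hEq
      have hcle : c ≤ -d := by
        rw [habs] at hEq
        calc c ≤ max 1 (max |b| |c|) := habsc
        _ = -d := hEq
      have hceq : c = -d := le_antisymm hcle hclow
      have hgf : g ^ 2 = (f ^ 2 - 1) * d := by linear_combination hceq - hc
      have h6 : (f ^ 2 - 1) * d ≤ 0 :=
        mul_nonpos_of_nonneg_of_nonpos (by linarith) hd.le
      have hg2 : g ^ 2 = 0 := le_antisymm (hgf ▸ h6) (sq_nonneg g)
      have hfd : (f ^ 2 - 1) * d = 0 := by rw [← hgf, hg2]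
      have hf1 : f ^ 2 = 1 := by
        rcases mul_eq_zero.mp hfd with h | h
        · linarith
        · exact absurd h hd.ne
      have hg0 : g = 0 := pow_eq_zero_iff (two_ne_zero) |>.mp hg2
      have hb0 : b = 0 := by rw [hbg, hg0]; ring
      rw [hquad, hb0, hceq]
      simp only [map_zero, zero_mul, add_zero, map_neg]
      ring
    · -- minpoly = X² − d → equality
      intro hmin
      have hb0 : b = 0 := by
        rw [hbdef, hmin, coeff_sub, coeff_X_pow, coeff_C]; norm_num
      have hcd : c = -d := by
        rw [hcdef, hmin, coeff_sub, coeff_X_pow, coeff_C]; norm_num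
      rw [hb0, hcd, habs]
      rw [abs_of_nonneg (by omega : (0:ℤ) ≤ -d)]
      simp only [abs_zero]
      rw [max_eq_right (by omega : (0:ℤ) ≤ -d), max_eq_right (by omega : (1:ℤ) ≤ -d)]
  · -- d ≡ 1 (mod 4)
    intro h4
    set m : ℤ := (1 - d) / 4 with hmdef
    have hm4 : 1 - d = 4 * m := by omega
    have hm1 : 1 ≤ m := by omega
    have hclow : m ≤ c := by
      rcases arith1_aux d b c e h4 he0 hkey with ⟨f, g, hf, hc⟩ | ⟨⟨g, hg⟩, ⟨f, hfe⟩⟩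
      · have hf2 : 1 ≤ f ^ 2 := one_le_sq_of_ne_zero_aux hf
        nlinarith [sq_nonneg g]
      · have hb2 : 1 ≤ b ^ 2 := one_le_sq_of_ne_zero_aux (by omega)
        have he2 : 1 ≤ e ^ 2 := one_le_sq_of_ne_zero_aux he0
        have hP : 0 ≤ (e ^ 2 - 1) * (-d) :=
          mul_nonneg (by linarith) (by linarith)
        have hid : 4 * c = b ^ 2 + (e ^ 2 - 1) * (-d) - d := by linear_combination -hkey
        linarith
    refine ⟨le_trans hclow habsc, ?_, ?_⟩
    · intro hEq
      have hcle : c ≤ m := le_trans habsc (le_of_eq hEq)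
      have hceq : c = m := le_antisymm hcle hclow
      rcases arith1_aux d b c e h4 he0 hkey with ⟨f, g, hf, hc⟩ | ⟨⟨g, hg⟩, ⟨f, hfe⟩⟩
      · exfalso
        have hf2 : 1 ≤ f ^ 2 := one_le_sq_of_ne_zero_aux hf
        have hnd : -d ≤ c := by nlinarith [sq_nonneg g]
        omega
      · have hb2 : 1 ≤ b ^ 2 := one_le_sq_of_ne_zero_aux (by omega)
        have he2 : 1 ≤ e ^ 2 := one_le_sq_of_ne_zero_aux he0
        have hP : 0 ≤ (e ^ 2 - 1) * (-d) :=
          mul_nonneg (by linarith) (by linarith)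
        have hbP : b ^ 2 = 1 - (e ^ 2 - 1) * (-d) := by
          linear_combination hkey + 4 * hceq - hm4
        have hb1 : b ^ 2 = 1 := by linarith
        have : (b - 1) * (b + 1) = 0 := by linear_combination hb1
        rcases mul_eq_zero.mp this with h | h
        · left
          rw [hquad, show b = 1 by omega, hceq]
          simp
        · right
          rw [hquad, show b = -1 by omega, hceq]
          simp only [map_neg, map_one]
          ring
    · intro hmin
      rcases hmin with hmin | hmin
      · have hb1 : b = 1 := by
          rw [hbdef, hmin]
          simp only [coeff_add, coeff_X_pow, coeff_X, coeff_C]; norm_num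
        have hcm : c = m := by
          rw [hcdef, hmin]
          simp only [coeff_add, coeff_X_pow, coeff_X, coeff_C]; norm_num
        rw [hb1, hcm, abs_one, abs_of_nonneg (by omega : (0:ℤ) ≤ m)]
        rw [max_eq_right hm1, max_eq_right hm1]
      · have hb1 : b = -1 := by
          rw [hbdef, hmin]
          simp only [coeff_add, coeff_sub, coeff_X_pow, coeff_X, coeff_C]; norm_num
        have hcm : c = m := by
          rw [hcdef, hmin]
          simp only [coeff_add, coeff_sub, coeff_X_pow, coeff_X, coeff_C]; norm_num
        rw [hb1, hcm, abs_neg, abs_one, abs_of_nonneg (by omega : (0:ℤ) ≤ m)]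
        rw [max_eq_right hm1, max_eq_right hm1]
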